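/- Let (ξ₁, ξ₂) ~ N((πβ, π)', Σ) with Σ fixed positive definite. Then as π → ∞, π·(β̂_U − β) converges in distribution to N(0, σ₁² − 2βσ₁₂ + β²σ₂²), where β̂_U is the unbiased IV estimator. -/

import Mathlib

open MeasureTheory ProbabilityTheory Filter
open scoped NNReal ENNReal

/-- Standard normal density `φ`. -/
noncomputable def stdPDF (x : ℝ) : ℝ :=
  (Real.sqrt (2 * Real.pi))⁻¹ * Real.exp (-(x ^ 2) / 2)

/-- Standard normal CDF `Φ`. -/
noncomputable def stdCDF (x : ℝ) : ℝ := ∫ t in Set.Iic x, stdPDF t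

/-- Mills-ratio estimator `τ̂(x, σ²) = (1/σ)(1 − Φ(x/σ))/φ(x/σ)`. -/
noncomputable def millsTau (σ x : ℝ) : ℝ :=
  (1 / σ) * (1 - stdCDF (x / σ)) / stdPDF (x / σ)

lemma stdPDF_eq : stdPDF = gaussianPDFReal 0 1 := by
  funext x
  simp [stdPDF, gaussianPDFReal]

lemma integrable_stdPDF : Integrable stdPDF := stdPDF_eq ▸ integrable_gaussianPDFReal 0 1

lemma integral_stdPDF : ∫ x, stdPDF x = 1 := by
  rw [stdPDF_eq]; exact integral_gaussianPDFReal_eq_one 0 one_ne_zero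

lemma stdPDF_pos (x : ℝ) : 0 < stdPDF x := by
  rw [stdPDF_eq]; exact gaussianPDFReal_pos 0 1 x one_ne_zero

lemma continuous_stdPDF : Continuous stdPDF := by
  unfold stdPDF
  exact continuous_const.mul ((continuous_pow 2).neg.div_const 2).rexp

lemma stdCDF_sub (x y : ℝ) : stdCDF y - stdCDF x = ∫ t in x..y, stdPDF t := by
  rw [stdCDF, stdCDF, intervalIntegral.integral_Iic_sub_Iic integrable_stdPDF.integrableOn
    integrable_stdPDF.integrableOn]

lemma hasDerivAt_stdCDF (x : ℝ) : HasDerivAt stdCDF (stdPDF x) x := by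
  have h : ∀ y, stdCDF y = stdCDF 0 + ∫ t in (0:ℝ)..y, stdPDF t := by
    intro y; rw [← stdCDF_sub 0 y]; ring
  have : HasDerivAt (fun y => stdCDF 0 + ∫ t in (0:ℝ)..y, stdPDF t) (stdPDF x) x := by
    refine HasDerivAt.const_add _ ?_
    exact intervalIntegral.integral_hasDerivAt_right
      integrable_stdPDF.intervalIntegrable
      (continuous_stdPDF.stronglyMeasurable.stronglyMeasurableAtFilter)
      continuous_stdPDF.continuousAt
  exact this.congr_of_eventuallyEq (Filter.Eventually.of_forall fun y => (h y))

lemma hasDerivAt_stdPDF (x : ℝ) : HasDerivAt stdPDF (-x * stdPDF x) x := by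
  have h : HasDerivAt (fun t : ℝ => -(t ^ 2) / 2) (-x) x := by
    have := ((hasDerivAt_pow 2 x).neg.div_const 2)
    refine this.congr_deriv ?_
    ring
  have := (h.exp).const_mul (Real.sqrt (2 * Real.pi))⁻¹
  refine this.congr_deriv ?_
  unfold stdPDF
  ring

lemma stdCDF_tendsto_one : Tendsto stdCDF atTop (nhds 1) := by
  have h : ∀ y, stdCDF y = stdCDF 0 + ∫ t in (0:ℝ)..y, stdPDF t := by
    intro y; rw [← stdCDF_sub 0 y]; ring
  have h2 : Tendsto (fun y => ∫ t in (0:ℝ)..y, stdPDF t) atTop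
      (nhds (∫ t in Set.Ioi (0:ℝ), stdPDF t)) :=
    intervalIntegral_tendsto_integral_Ioi 0 integrable_stdPDF.integrableOn tendsto_id
  have h3 : stdCDF 0 + ∫ t in Set.Ioi (0:ℝ), stdPDF t = 1 := by
    rw [stdCDF, intervalIntegral.integral_Iic_add_Ioi integrable_stdPDF.integrableOn
      integrable_stdPDF.integrableOn, integral_stdPDF]
  have := (tendsto_const_nhds.add h2 : Tendsto (fun y => stdCDF 0 + ∫ t in (0:ℝ)..y, stdPDF t)
    atTop (nhds (stdCDF 0 + ∫ t in Set.Ioi (0:ℝ), stdPDF t)))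
  rw [h3] at this
  exact this.congr fun y => (h y).symm

lemma stdPDF_tendsto_zero : Tendsto stdPDF atTop (nhds 0) := by
  unfold stdPDF
  rw [show (0:ℝ) = (Real.sqrt (2 * Real.pi))⁻¹ * 0 by ring]
  refine tendsto_const_nhds.mul ?_
  refine Real.tendsto_exp_atBot.comp ?_
  have h1 : Tendsto (fun y : ℝ => y ^ 2) atTop atTop := tendsto_pow_atTop two_ne_zero
  have h2 := h1.atTop_mul_const_of_neg (show -(1/2:ℝ) < 0 by norm_num)
  exact h2.congr fun y => by ring

noncomputable def tailG (x : ℝ) : ℝ := 1 - stdCDF x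

lemma hasDerivAt_tailG (x : ℝ) : HasDerivAt tailG (-stdPDF x) x := by
  exact ((hasDerivAt_stdCDF x).const_sub 1)

lemma tailG_tendsto_zero : Tendsto tailG atTop (nhds 0) := by
  have := stdCDF_tendsto_one.const_sub 1
  simp only [sub_self] at this; exact this

/-- lower auxiliary function -/
noncomputable def lowF (x : ℝ) : ℝ := tailG x - stdPDF x * (x⁻¹ - x⁻¹ ^ 3)
/-- upper auxiliary function -/
noncomputable def uppF (x : ℝ) : ℝ := tailG x - stdPDF x * (x⁻¹ - x⁻¹ ^ 3 + 3 * x⁻¹ ^ 5)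

lemma hasDerivAt_lowF {x : ℝ} (hx : x ≠ 0) :
    HasDerivAt lowF (-3 * stdPDF x * x⁻¹ ^ 4) x := by
  have h1 : HasDerivAt (fun t : ℝ => t⁻¹ - t⁻¹ ^ 3)
      (-(x ^ 2)⁻¹ - 3 * x⁻¹ ^ 2 * -(x ^ 2)⁻¹) x :=
    (hasDerivAt_inv hx).sub ((hasDerivAt_inv hx).pow 3)
  have h2 := (hasDerivAt_stdPDF x).mul h1
  have h3 := (hasDerivAt_tailG x).sub h2
  refine h3.congr_deriv ?_
  unfold stdPDF
  field_simp
  ring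

lemma hasDerivAt_uppF {x : ℝ} (hx : x ≠ 0) :
    HasDerivAt uppF (15 * stdPDF x * x⁻¹ ^ 6) x := by
  have h1 : HasDerivAt (fun t : ℝ => t⁻¹ - t⁻¹ ^ 3 + 3 * t⁻¹ ^ 5)
      (-(x ^ 2)⁻¹ - 3 * x⁻¹ ^ 2 * -(x ^ 2)⁻¹ + 3 * (5 * x⁻¹ ^ 4 * -(x ^ 2)⁻¹)) x :=
    ((hasDerivAt_inv hx).sub ((hasDerivAt_inv hx).pow 3)).add
      (((hasDerivAt_inv hx).pow 5).const_mul 3)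
  have h2 := (hasDerivAt_stdPDF x).mul h1
  have h3 := (hasDerivAt_tailG x).sub h2
  refine h3.congr_deriv ?_
  unfold stdPDF
  field_simp
  ring

lemma lowF_tendsto_zero : Tendsto lowF atTop (nhds 0) := by
  have h1 : Tendsto (fun x : ℝ => x⁻¹) atTop (nhds 0) := tendsto_inv_atTop_zero
  have := tailG_tendsto_zero.sub
    (stdPDF_tendsto_zero.mul (h1.sub (h1.pow 3)))
  norm_num at this
  exact this.congr fun x => by rw [lowF]; ring

lemma uppF_tendsto_zero : Tendsto uppF atTop (nhds 0) := by
  have h1 : Tendsto (fun x : ℝ => x⁻¹) atTop (nhds 0) := tendsto_inv_atTop_zero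
  have := tailG_tendsto_zero.sub
    (stdPDF_tendsto_zero.mul ((h1.sub (h1.pow 3)).add ((h1.pow 5).const_mul 3)))
  norm_num at this
  exact this.congr fun x => by rw [uppF]; ring

lemma lowF_nonneg {x : ℝ} (hx : 0 < x) : 0 ≤ lowF x := by
  have hanti : AntitoneOn lowF (Set.Ici x) := by
    refine antitoneOn_of_deriv_nonpos (convex_Ici x) ?_ ?_ ?_
    · intro t ht
      exact ((hasDerivAt_lowF (ne_of_gt (lt_of_lt_of_le hx ht))).continuousAt).continuousWithinAt
    · intro t ht
      rw [interior_Ici] at ht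
      exact (hasDerivAt_lowF (ne_of_gt (hx.trans ht))).differentiableAt.differentiableWithinAt
    · intro t ht
      rw [interior_Ici] at ht
      rw [(hasDerivAt_lowF (ne_of_gt (hx.trans ht))).deriv]
      have h1 := (stdPDF_pos t).le
      have h2 : (0:ℝ) ≤ t⁻¹ ^ 4 := by positivity
      nlinarith
  refine le_of_tendsto lowF_tendsto_zero ?_
  filter_upwards [eventually_ge_atTop x] with y hy
  exact hanti Set.self_mem_Ici hy hy

lemma uppF_nonpos {x : ℝ} (hx : 0 < x) : uppF x ≤ 0 := by
  have hmono : MonotoneOn uppF (Set.Ici x) := by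
    refine monotoneOn_of_deriv_nonneg (convex_Ici x) ?_ ?_ ?_
    · intro t ht
      exact ((hasDerivAt_uppF (ne_of_gt (lt_of_lt_of_le hx ht))).continuousAt).continuousWithinAt
    · intro t ht
      rw [interior_Ici] at ht
      exact (hasDerivAt_uppF (ne_of_gt (hx.trans ht))).differentiableAt.differentiableWithinAt
    · intro t ht
      rw [interior_Ici] at ht
      rw [(hasDerivAt_uppF (ne_of_gt (hx.trans ht))).deriv]
      have h1 := (stdPDF_pos t).le
      have h2 : (0:ℝ) ≤ t⁻¹ ^ 6 := by positivity
      nlinarith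
  refine ge_of_tendsto uppF_tendsto_zero ?_
  filter_upwards [eventually_ge_atTop x] with y hy
  exact hmono Set.self_mem_Ici hy hy

lemma millsTau_bounds {σ t : ℝ} (hσ : 0 < σ) (ht : 0 < t) :
    (1/σ) * ((t/σ)⁻¹ - (t/σ)⁻¹ ^ 3) ≤ millsTau σ t ∧
      millsTau σ t ≤ (1/σ) * ((t/σ)⁻¹ - (t/σ)⁻¹ ^ 3 + 3 * (t/σ)⁻¹ ^ 5) := by
  set u := t / σ with hu_def
  have hu : 0 < u := div_pos ht hσ
  have hp := stdPDF_pos u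
  have hlow := lowF_nonneg hu
  have hupp := uppF_nonpos hu
  rw [lowF] at hlow
  rw [uppF] at hupp
  have hmt : millsTau σ t = (1/σ) * (tailG u / stdPDF u) := by
    rw [millsTau, tailG, mul_div_assoc]
  have hσ' : 0 < 1/σ := by positivity
  constructor
  · rw [hmt]
    refine mul_le_mul_of_nonneg_left ?_ hσ'.le
    rw [le_div_iff₀ hp]
    nlinarith
  · rw [hmt]
    refine mul_le_mul_of_nonneg_left ?_ hσ'.le
    rw [div_le_iff₀ hp]
    nlinarith

lemma bound_eq_low {σ t : ℝ} (hσ : σ ≠ 0) (ht : t ≠ 0) :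
    (1/σ) * ((t/σ)⁻¹ - (t/σ)⁻¹ ^ 3) = t⁻¹ - σ^2 * (t⁻¹)^3 := by
  field_simp

lemma bound_eq_upp {σ t : ℝ} (hσ : σ ≠ 0) (ht : t ≠ 0) :
    (1/σ) * ((t/σ)⁻¹ - (t/σ)⁻¹ ^ 3 + 3 * (t/σ)⁻¹ ^ 5)
      = t⁻¹ - σ^2 * (t⁻¹)^3 + 3 * σ^4 * (t⁻¹)^5 := by
  field_simp

lemma tendsto_inv_shift (a : ℝ) : Tendsto (fun π : ℝ => (π + a)⁻¹) atTop (nhds 0) :=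
  Tendsto.inv_tendsto_atTop (tendsto_atTop_add_const_right _ a tendsto_id)

lemma tendsto_g (a : ℝ) : Tendsto (fun π : ℝ => π * (π + a)⁻¹) atTop (nhds 1) := by
  have h : Tendsto (fun π : ℝ => 1 - a * (π + a)⁻¹) atTop (nhds 1) := by
    have := (tendsto_inv_shift a).const_mul a
    have h2 := this.const_sub 1
    simpa using h2
  refine h.congr' ?_
  filter_upwards [eventually_gt_atTop (-a)] with π hπ
  have hpa : π + a ≠ 0 := by linarith
  field_simp
  ring

lemma tendsto_mills_one {σ : ℝ} (hσ : 0 < σ) (a : ℝ) :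
    Tendsto (fun π : ℝ => π * millsTau σ (π + a)) atTop (nhds 1) := by
  have hL : Tendsto (fun π : ℝ => π * ((π+a)⁻¹ - σ^2 * ((π+a)⁻¹)^3)) atTop (nhds 1) := by
    have h := (tendsto_g a).sub (((tendsto_g a).const_mul (σ^2)).mul
      ((tendsto_inv_shift a).pow 2))
    rw [show (1:ℝ) - σ ^ 2 * 1 * 0 ^ 2 = 1 by norm_num] at h
    exact h.congr fun π => by ring
  have hU : Tendsto (fun π : ℝ => π * ((π+a)⁻¹ - σ^2 * ((π+a)⁻¹)^3)
      + 3 * σ^4 * (π * (π+a)⁻¹) * ((π+a)⁻¹)^4) atTop (nhds 1) := by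
    have h := hL.add ((((tendsto_g a).const_mul (3*σ^4)).mul ((tendsto_inv_shift a).pow 4)))
    rw [show (1:ℝ) + 3 * σ ^ 4 * 1 * 0 ^ 4 = 1 by norm_num] at h
    exact h.congr fun π => by ring
  refine tendsto_of_tendsto_of_tendsto_of_le_of_le' hL hU ?_ ?_
  · filter_upwards [eventually_gt_atTop 0, eventually_gt_atTop (-a)] with π h0 ha
    have hpa : 0 < π + a := by linarith
    have := (millsTau_bounds hσ hpa).1
    rw [bound_eq_low hσ.ne' hpa.ne'] at this
    nlinarith
  · filter_upwards [eventually_gt_atTop 0, eventually_gt_atTop (-a)] with π h0 ha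
    have hpa : 0 < π + a := by linarith
    have := (millsTau_bounds hσ hpa).2
    rw [bound_eq_upp hσ.ne' hpa.ne'] at this
    nlinarith

lemma tendsto_mills_two {σ : ℝ} (hσ : 0 < σ) (a : ℝ) :
    Tendsto (fun π : ℝ => π * (π * millsTau σ (π + a) - 1)) atTop (nhds (-a)) := by
  have hg := tendsto_g a
  have hinv := tendsto_inv_shift a
  have hL : Tendsto (fun π : ℝ => -a * (π * (π+a)⁻¹) - σ^2 * (π * (π+a)⁻¹)^2 * (π+a)⁻¹)
      atTop (nhds (-a)) := by
    have h := (hg.const_mul (-a)).sub (((hg.pow 2).const_mul (σ^2)).mul hinv)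
    rw [show -a * 1 - σ ^ 2 * 1 ^ 2 * 0 = -a by norm_num] at h
    exact h.congr fun π => by ring
  have hU : Tendsto (fun π : ℝ => (-a * (π * (π+a)⁻¹) - σ^2 * (π * (π+a)⁻¹)^2 * (π+a)⁻¹)
      + 3 * σ^4 * (π * (π+a)⁻¹)^2 * ((π+a)⁻¹)^3) atTop (nhds (-a)) := by
    have h := hL.add (((hg.pow 2).const_mul (3*σ^4)).mul (hinv.pow 3))
    rw [show -a + 3 * σ ^ 4 * 1 ^ 2 * 0 ^ 3 = -a by norm_num] at h
    exact h.congr fun π => by ring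
  refine tendsto_of_tendsto_of_tendsto_of_le_of_le' hL hU ?_ ?_
  · filter_upwards [eventually_gt_atTop 0, eventually_gt_atTop (-a)] with π h0 ha
    have hpa : 0 < π + a := by linarith
    have hb := (millsTau_bounds hσ hpa).1
    rw [bound_eq_low hσ.ne' hpa.ne'] at hb
    have key : -a * (π * (π+a)⁻¹) - σ^2 * (π * (π+a)⁻¹)^2 * (π+a)⁻¹
        = π * (π * ((π+a)⁻¹ - σ^2 * ((π+a)⁻¹)^3) - 1) := by
      field_simp
      ring
    rw [key]
    have h1 : π * ((π+a)⁻¹ - σ^2 * ((π+a)⁻¹)^3) ≤ π * millsTau σ (π + a) := by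
      nlinarith
    nlinarith
  · filter_upwards [eventually_gt_atTop 0, eventually_gt_atTop (-a)] with π h0 ha
    have hpa : 0 < π + a := by linarith
    have hb := (millsTau_bounds hσ hpa).2
    rw [bound_eq_upp hσ.ne' hpa.ne'] at hb
    have key : (-a * (π * (π+a)⁻¹) - σ^2 * (π * (π+a)⁻¹)^2 * (π+a)⁻¹)
        + 3 * σ^4 * (π * (π+a)⁻¹)^2 * ((π+a)⁻¹)^3
        = π * (π * ((π+a)⁻¹ - σ^2 * ((π+a)⁻¹)^3 + 3 * σ^4 * ((π+a)⁻¹)^5) - 1) := by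
      field_simp
      ring
    rw [key]
    have h1 : π * millsTau σ (π + a)
        ≤ π * ((π+a)⁻¹ - σ^2 * ((π+a)⁻¹)^3 + 3 * σ^4 * ((π+a)⁻¹)^5) := by
      nlinarith
    nlinarith

lemma pointwise_limit {σ : ℝ} (hσ : 0 < σ) (a b β c : ℝ) :
    Tendsto (fun π : ℝ => π * (millsTau σ (π + a) * ((β - c) * π + b) + c - β)) atTop
      (nhds (b - (β - c) * a)) := by
  have h := ((tendsto_mills_two hσ a).const_mul (β - c)).add
    ((tendsto_mills_one hσ a).const_mul b)
  rw [show (β - c) * -a + b * 1 = b - (β - c) * a by ring] at h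
  exact h.congr fun π => by ring

lemma continuous_stdCDF : Continuous stdCDF :=
  continuous_iff_continuousAt.mpr fun x => (hasDerivAt_stdCDF x).continuousAt

lemma continuous_millsTau (σ : ℝ) : Continuous (millsTau σ) := by
  unfold millsTau
  exact (continuous_const.mul (continuous_const.sub
    (continuous_stdCDF.comp (continuous_id.div_const σ)))).div
    (continuous_stdPDF.comp (continuous_id.div_const σ)) fun x => (stdPDF_pos _).ne'

lemma integral_gaussianReal_eq (μ₀ : ℝ) {v : ℝ≥0} (hv : v ≠ 0) (g : ℝ → ℝ) :
    ∫ x, g x ∂(gaussianReal μ₀ v) = ∫ x, gaussianPDFReal μ₀ v x * g x := by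
  rw [gaussianReal_of_var_ne_zero _ hv]
  have h : (gaussianPDF μ₀ v) = fun x => ((gaussianPDFReal μ₀ v x).toNNReal : ℝ≥0∞) := by
    funext x; rfl
  rw [h, integral_withDensity_eq_integral_smul
    ((measurable_gaussianPDFReal μ₀ v).real_toNNReal) g]
  congr 1
  funext x
  rw [NNReal.smul_def, Real.coe_toNNReal _ (gaussianPDFReal_nonneg μ₀ v x), smul_eq_mul]

lemma nnreal_coe_anon (a : ℝ) (ha : 0 ≤ a) : (((⟨a, ha⟩ : ℝ≥0)) : ℝ) = a := rfl

lemma gauss_conv {s d : ℝ} (hs : 0 < s) (u : ℝ) :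
    ∫ y, gaussianPDFReal 0 (NNReal.mk (s^2) (sq_nonneg s)) (u - d * y) * gaussianPDFReal 0 1 y
      = gaussianPDFReal 0 (NNReal.mk (s^2 + d^2) (by positivity)) u := by
  have hS : (0:ℝ) < s^2 + d^2 := by positivity
  have hw : (0:ℝ) < s^2 / (s^2 + d^2) := by positivity
  have hne : s^2 + d^2 ≠ 0 := hS.ne'
  have key : ∀ y, gaussianPDFReal 0 (NNReal.mk (s^2) (sq_nonneg s)) (u - d * y) * gaussianPDFReal 0 1 y
      = gaussianPDFReal 0 (NNReal.mk (s^2 + d^2) (hS.le)) u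
        * gaussianPDFReal (d * u / (s^2 + d^2)) (NNReal.mk (s^2/(s^2+d^2)) (hw.le)) y := by
    intro y
    unfold gaussianPDFReal
    simp only [NNReal.coe_mk, nnreal_coe_anon, NNReal.coe_one, sub_zero, mul_one]
    rw [mul_mul_mul_comm, ← Real.exp_add, mul_mul_mul_comm, ← Real.exp_add]
    congr 1
    · rw [← mul_inv, ← mul_inv, ← Real.sqrt_mul (by positivity), ← Real.sqrt_mul (by positivity)]
      congr 2
      field_simp
    · congr 1
      field_simp
      ring
  simp_rw [key]
  rw [integral_const_mul, integral_gaussianPDFReal_eq_one (d * u / (s^2 + d^2)) (by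
    simp only [ne_eq, ← NNReal.coe_eq_zero, nnreal_coe_anon]
    positivity), mul_one]

lemma law_integral {Ω : Type*} [MeasurableSpace Ω] (P : Measure Ω) [IsProbabilityMeasure P]
    (Z₁ Z₂ : Ω → ℝ) (hm₁ : Measurable Z₁) (hm₂ : Measurable Z₂)
    (hind : IndepFun Z₁ Z₂ P)
    (hZ₁ : P.map Z₁ = gaussianReal 0 1) (hZ₂ : P.map Z₂ = gaussianReal 0 1)
    {s : ℝ} (hs : 0 < s) (d : ℝ) (f : BoundedContinuousFunction ℝ ℝ) :
    ∫ ω, f (s * Z₁ ω + d * Z₂ ω) ∂P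
      = ∫ x, f x ∂(gaussianReal 0 (NNReal.mk (s^2 + d^2) (by positivity))) := by
  have hs2 : (NNReal.mk (s^2) (sq_nonneg s) : ℝ≥0) ≠ 0 := by
    exact NNReal.coe_ne_zero.mp (pow_ne_zero 2 hs.ne')
  set μ : Measure ℝ := gaussianReal 0 1 with hμ
  have hpair : P.map (fun ω => (Z₂ ω, Z₁ ω)) = μ.prod μ := by
    have h := (indepFun_iff_map_prod_eq_prod_map_map hm₂.aemeasurable hm₁.aemeasurable).mp
      hind.symm
    rw [h, hZ₁, hZ₂]
  set F : BoundedContinuousFunction (ℝ × ℝ) ℝ :=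
    f.compContinuous ⟨fun p => s * p.2 + d * p.1, by continuity⟩ with hF
  have step1 : ∫ ω, f (s * Z₁ ω + d * Z₂ ω) ∂P = ∫ p, F p ∂(μ.prod μ) := by
    rw [← hpair, integral_map (hm₂.prodMk hm₁).aemeasurable F.continuous.aestronglyMeasurable]
    rfl
  rw [step1, MeasureTheory.integral_prod _ (F.integrable _)]
  have hinner : ∀ y : ℝ, ∫ x, F (y, x) ∂μ
      = ∫ u, gaussianPDFReal (d*y) (NNReal.mk (s^2) (sq_nonneg s)) u * f u := by
    intro y
    have hmap : μ.map (fun x => s * x + d * y) = gaussianReal (d*y) (NNReal.mk (s^2) (sq_nonneg s)) := by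
      have h1 : μ.map (fun x : ℝ => s * x) = gaussianReal 0 (NNReal.mk (s^2) (sq_nonneg s)) := by
        rw [hμ, gaussianReal_map_const_mul s]
        norm_num
      have h3 : (fun x : ℝ => s * x + d * y) = ((fun x => x + d * y) ∘ fun x => s * x) := rfl
      rw [h3, ← Measure.map_map (measurable_add_const (d*y)) (measurable_const_mul s), h1]
      exact (gaussianReal_map_add_const (d*y)).trans (by rw [zero_add])
    have : ∫ x, F (y, x) ∂μ = ∫ u, f u ∂(μ.map (fun x => s * x + d * y)) := by
      rw [integral_map (by fun_prop) f.continuous.aestronglyMeasurable]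
      rfl
    rw [this, hmap, integral_gaussianReal_eq _ hs2]
  simp_rw [hinner]
  have hGc : Continuous fun p : ℝ × ℝ =>
      gaussianPDFReal (d * p.1) (NNReal.mk (s^2) (sq_nonneg s)) p.2 * f p.2 := by
    apply Continuous.mul
    · unfold gaussianPDFReal
      fun_prop
    · exact f.continuous.comp continuous_snd
  have hint_y : ∀ y : ℝ, Integrable
      (fun u => gaussianPDFReal (d * y) (NNReal.mk (s^2) (sq_nonneg s)) u * f u) volume := by
    intro y
    refine Integrable.mono' ((integrable_gaussianPDFReal (d*y) (NNReal.mk (s^2) (sq_nonneg s))).const_mul ‖f‖) ?_ ?_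
    · exact (hGc.comp (Continuous.prodMk_right y)).aestronglyMeasurable
    · refine Filter.Eventually.of_forall fun u => ?_
      rw [norm_mul, Real.norm_of_nonneg (gaussianPDFReal_nonneg _ _ _)]
      have := f.norm_coe_le_norm u
      have hp := gaussianPDFReal_nonneg (d*y) (NNReal.mk (s^2) (sq_nonneg s) : ℝ≥0) u
      nlinarith
  have hGint : Integrable (fun p : ℝ × ℝ =>
      gaussianPDFReal (d * p.1) (NNReal.mk (s^2) (sq_nonneg s)) p.2 * f p.2) (μ.prod volume) := by
    rw [integrable_prod_iff hGc.aestronglyMeasurable]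
    constructor
    · exact Filter.Eventually.of_forall hint_y
    · refine Integrable.mono' (integrable_const ‖f‖) ?_ ?_
      · exact (hGc.aestronglyMeasurable.norm.integral_prod_right')
      · refine Filter.Eventually.of_forall fun y => ?_
        rw [Real.norm_of_nonneg (integral_nonneg fun u => norm_nonneg _)]
        have hb : ∀ u : ℝ, ‖gaussianPDFReal (d * y) (NNReal.mk (s^2) (sq_nonneg s)) u * f u‖
            ≤ gaussianPDFReal (d * y) (NNReal.mk (s^2) (sq_nonneg s)) u * ‖f‖ := by
          intro u
          rw [norm_mul, Real.norm_of_nonneg (gaussianPDFReal_nonneg _ _ _)]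
          have := f.norm_coe_le_norm u
          have hp := gaussianPDFReal_nonneg (d*y) (NNReal.mk (s^2) (sq_nonneg s) : ℝ≥0) u
          nlinarith
        calc ∫ u, ‖gaussianPDFReal (d * y) (NNReal.mk (s^2) (sq_nonneg s)) u * f u‖
            ≤ ∫ u, gaussianPDFReal (d * y) (NNReal.mk (s^2) (sq_nonneg s)) u * ‖f‖ := by
              exact integral_mono (hint_y y).norm
                ((integrable_gaussianPDFReal _ _).mul_const ‖f‖) hb
          _ = ‖f‖ := by
              rw [integral_mul_const, integral_gaussianPDFReal_eq_one _ hs2, one_mul]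
  rw [integral_integral_swap hGint]
  have houter : ∀ u : ℝ, ∫ y, gaussianPDFReal (d * y) (NNReal.mk (s^2) (sq_nonneg s)) u * f u ∂μ
      = gaussianPDFReal 0 (NNReal.mk (s^2 + d^2) (by positivity)) u * f u := by
    intro u
    rw [integral_mul_const]
    congr 1
    have hrw : ∀ y : ℝ, gaussianPDFReal (d * y) (NNReal.mk (s^2) (sq_nonneg s)) u
        = gaussianPDFReal 0 (NNReal.mk (s^2) (sq_nonneg s)) (u - d * y) := by
      intro y
      rw [gaussianPDFReal_sub, zero_add]
    simp_rw [hrw]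
    rw [hμ, integral_gaussianReal_eq 0 one_ne_zero]
    rw [← gauss_conv hs u]
    congr 1
    funext y
    ring
  simp_rw [houter]
  rw [← integral_gaussianReal_eq]
  simp only [ne_eq, ← NNReal.coe_eq_zero, NNReal.coe_mk, nnreal_coe_anon]
  positivity

/-- π·(β̂_U − β) converges in distribution to N(0, σ₁² − 2βσ₁₂ + β²σ₂²) as π → ∞. -/
theorem stmt10 {Ω : Type*} [MeasurableSpace Ω] (P : Measure Ω) [IsProbabilityMeasure P]
    (Z₁ Z₂ : Ω → ℝ) (hm₁ : Measurable Z₁) (hm₂ : Measurable Z₂)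
    (hind : IndepFun Z₁ Z₂ P)
    (hZ₁ : P.map Z₁ = gaussianReal 0 1) (hZ₂ : P.map Z₂ = gaussianReal 0 1)
    (β σ₁ σ₁₂ σ₂ : ℝ) (hσ₂ : 0 < σ₂)
    (hpd : σ₁₂ ^ 2 < σ₁ ^ 2 * σ₂ ^ 2)
    (ξ₁ : ℝ → Ω → ℝ) (ξ₂ : ℝ → Ω → ℝ)
    (hξ₂ : ∀ π, ξ₂ π = fun ω => π + σ₂ * Z₂ ω)
    (hξ₁ : ∀ π, ξ₁ π = fun ω => π * β + (σ₁₂ / σ₂) * Z₂ ω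
        + Real.sqrt (σ₁ ^ 2 - σ₁₂ ^ 2 / σ₂ ^ 2) * Z₁ ω) :
    ∀ f : BoundedContinuousFunction ℝ ℝ,
      Tendsto (fun π : ℝ =>
          ∫ ω, f (π * ((millsTau σ₂ (ξ₂ π ω) * (ξ₁ π ω - (σ₁₂ / σ₂ ^ 2) * ξ₂ π ω)
              + σ₁₂ / σ₂ ^ 2) - β)) ∂P)
        atTop
        (nhds (∫ x, f x
          ∂(gaussianReal 0 (σ₁ ^ 2 - 2 * β * σ₁₂ + β ^ 2 * σ₂ ^ 2).toNNReal))) := by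
  intro f
  set c : ℝ := σ₁₂ / σ₂ ^ 2 with hc
  set s : ℝ := Real.sqrt (σ₁ ^ 2 - σ₁₂ ^ 2 / σ₂ ^ 2) with hs_def
  set d : ℝ := σ₁₂ / σ₂ - β * σ₂ with hd
  have hσ₂0 : σ₂ ≠ 0 := hσ₂.ne'
  have hdiff : 0 < σ₁ ^ 2 - σ₁₂ ^ 2 / σ₂ ^ 2 := by
    rw [sub_pos, div_lt_iff₀ (by positivity)]
    linarith
  have hs : 0 < s := Real.sqrt_pos.mpr hdiff
  have hs2 : s ^ 2 = σ₁ ^ 2 - σ₁₂ ^ 2 / σ₂ ^ 2 := Real.sq_sqrt hdiff.le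
  have hv : σ₁ ^ 2 - 2 * β * σ₁₂ + β ^ 2 * σ₂ ^ 2 = s ^ 2 + d ^ 2 := by
    rw [hs2, hd]
    field_simp
    ring
  have hvar : (σ₁ ^ 2 - 2 * β * σ₁₂ + β ^ 2 * σ₂ ^ 2).toNNReal
      = (NNReal.mk (s ^ 2 + d ^ 2) (by positivity) : ℝ≥0) := by
    apply NNReal.coe_injective
    rw [hv, Real.coe_toNNReal _ (by positivity)]
    rfl
  rw [hvar, ← law_integral P Z₁ Z₂ hm₁ hm₂ hind hZ₁ hZ₂ hs d f]
  refine tendsto_integral_filter_of_dominated_convergence (fun _ => ‖f‖) ?_ ?_ ?_ ?_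
  · refine Filter.Eventually.of_forall fun π => ?_
    have hmeas₂ : Measurable (ξ₂ π) := by
      rw [hξ₂]
      exact measurable_const.add (hm₂.const_mul σ₂)
    have hmeas₁ : Measurable (ξ₁ π) := by
      rw [hξ₁]
      exact (measurable_const.add (hm₂.const_mul _)).add (hm₁.const_mul _)
    have hmes : Measurable fun ω =>
        π * ((millsTau σ₂ (ξ₂ π ω) * (ξ₁ π ω - c * ξ₂ π ω) + c) - β) :=
      (((((continuous_millsTau σ₂).measurable.comp hmeas₂).mul
        (hmeas₁.sub (hmeas₂.const_mul c))).add_const c).sub_const β).const_mul π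
    exact (f.continuous.measurable.comp hmes).aestronglyMeasurable
  · exact Filter.Eventually.of_forall fun π =>
      Filter.Eventually.of_forall fun ω => f.norm_coe_le_norm _
  · exact integrable_const _
  · refine Filter.Eventually.of_forall fun ω => ?_
    have harg : ∀ π : ℝ, ξ₁ π ω - c * ξ₂ π ω = (β - c) * π + s * Z₁ ω := by
      intro π
      rw [hξ₁, hξ₂, hc]
      field_simp
      try ring
    have hlim := pointwise_limit hσ₂ (σ₂ * Z₂ ω) (s * Z₁ ω) β c
    rw [show s * Z₁ ω - (β - c) * (σ₂ * Z₂ ω) = s * Z₁ ω + d * Z₂ ω by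
      rw [hd, hc]; field_simp; try ring] at hlim
    have hlim2 : Tendsto (fun π : ℝ =>
        π * ((millsTau σ₂ (ξ₂ π ω) * (ξ₁ π ω - c * ξ₂ π ω) + c) - β)) atTop
        (nhds (s * Z₁ ω + d * Z₂ ω)) := by
      refine hlim.congr fun π => ?_
      rw [harg π, hξ₂]
      try ring
    exact (f.continuous.tendsto _).comp hlim2
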